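/- Let L and, for each p ∈ L, L_p be linear orders, each admitting a strictly order-preserving map into ([0,1]^{<ω₁}_{↘0}, <_altlex). Then the lexicographic gluing {(p,q) : p ∈ L, q ∈ L_p}, ordered by (p,q) < (p',q') iff p < p' or (p = p' and q <_{L_p} q'), also admits a strictly order-preserving map into ([0,1]^{<ω₁}_{↘0}, <_altlex). -/

import Mathlib

open Ordinal Set

noncomputable section

/-- Parity of an ordinal: `a = γ + n` with `γ` limit, `n < ω`; even iff `n` is even. -/
def OrdEven (a : Ordinal) : Prop := a % 2 = 0

/-- Upper semicontinuity. -/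
def USC {X : Type} [TopologicalSpace X] (f : X → ℝ) : Prop :=
  ∀ r : ℝ, IsOpen (f ⁻¹' Set.Iio r)

/-- The least ordinal where two transfinite sequences differ. -/
def dOrd (f g : Ordinal → ℝ) : Ordinal := sInf {a | f a ≠ g a}

/-- The alternating lexicographical order on transfinite sequences of reals. -/
def AltLex (f g : Ordinal → ℝ) : Prop :=
  f ≠ g ∧ ((OrdEven (dOrd f g) ∧ f (dOrd f g) < g (dOrd f g)) ∨
    (¬ OrdEven (dOrd f g) ∧ g (dOrd f g) < f (dOrd f g)))

/-- `f` encodes a strictly decreasing countable transfinite sequence in `[0,1]`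
with last element `0` at index `ξ` (padded with `0` beyond `ξ`). -/
def IsDSeqLen (f : Ordinal → ℝ) (ξ : Ordinal) : Prop :=
  ξ < (Cardinal.aleph 1).ord ∧ (∀ a, f a ∈ Set.Icc (0:ℝ) 1) ∧
  (∀ a b, a < b → b ≤ ξ → f b < f a) ∧ (∀ a, ξ ≤ a → f a = 0)

/-- Membership in `[0,1]^{<ω₁}_{↘0}`. -/
def IsDSeq (f : Ordinal → ℝ) : Prop := ∃ ξ, IsDSeqLen f ξ

lemma dOrd_mem {f g : Ordinal → ℝ} (h : f ≠ g) : f (dOrd f g) ≠ g (dOrd f g) := by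
  have hne : {a | f a ≠ g a}.Nonempty := by
    rw [Function.ne_iff] at h; exact h
  exact csInf_mem hne

lemma dOrd_eq_below {f g : Ordinal → ℝ} {a} (h : a < dOrd f g) : f a = g a := by
  by_contra hne
  exact absurd (csInf_le' (s := {a | f a ≠ g a}) hne) (not_le.2 h)

lemma dOrd_eq {f g : Ordinal → ℝ} {d : Ordinal} (heq : ∀ a < d, f a = g a)
    (hne : f d ≠ g d) : dOrd f g = d := by
  refine le_antisymm (csInf_le' hne) (le_csInf ⟨d, hne⟩ ?_)
  intro x hx
  by_contra h
  exact hx (heq x (not_le.1 h))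

lemma dOrd_symm (f g : Ordinal → ℝ) : dOrd f g = dOrd g f := by
  unfold dOrd
  congr 1
  ext a
  exact ne_comm

lemma ord_even_add {c d : Ordinal} (hc : OrdEven c) : (c + d) % 2 = d % 2 := by
  have h2 : (2 : Ordinal) ≠ 0 := two_ne_zero
  have hcc : (2 : Ordinal) * (c / 2) = c := by
    have := Ordinal.div_add_mod c 2
    rw [hc, add_zero] at this; exact this
  have hdd : (2 : Ordinal) * (d / 2) + d % 2 = d := Ordinal.div_add_mod d 2
  have : c + d = 2 * (c / 2 + d / 2) + d % 2 := by
    rw [mul_add, add_assoc, hcc, hdd]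
  rw [this, Ordinal.mul_add_mod_self]
  exact Ordinal.mod_eq_of_lt (Ordinal.mod_lt d h2)

lemma ord_even_add_iff {c d : Ordinal} (hc : OrdEven c) : OrdEven (c + d) ↔ OrdEven d := by
  unfold OrdEven; rw [ord_even_add hc]

lemma altlex_of {f g F G : Ordinal → ℝ} (h : AltLex f g)
    (heq : ∀ a < dOrd f g, F a = G a)
    (hiff : F (dOrd f g) < G (dOrd f g) ↔ f (dOrd f g) < g (dOrd f g))
    (hne : F (dOrd f g) ≠ G (dOrd f g)) : AltLex F G := by
  have hd : dOrd F G = dOrd f g := dOrd_eq heq hne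
  have hne0 : f (dOrd f g) ≠ g (dOrd f g) := dOrd_mem h.1
  have hiff' : G (dOrd f g) < F (dOrd f g) ↔ g (dOrd f g) < f (dOrd f g) := by
    constructor
    · intro h1
      rcases hne0.lt_or_gt with h2 | h2
      · exact absurd (hiff.2 h2) (asymm h1)
      · exact h2
    · intro h1
      rcases hne.lt_or_gt with h2 | h2
      · exact absurd (hiff.1 h2) (asymm h1)
      · exact h2
  refine ⟨fun hFG => hne (congrFun hFG _), ?_⟩
  rw [hd]
  rcases h.2 with ⟨he, hlt⟩ | ⟨he, hlt⟩
  · exact Or.inl ⟨he, hiff.2 hlt⟩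
  · exact Or.inr ⟨he, hiff'.2 hlt⟩


lemma altlex_shift {c : Ordinal} (hc : OrdEven c) {g g' F G : Ordinal → ℝ}
    (hF : ∀ b, F (c + b) = g b / 3) (hG : ∀ b, G (c + b) = g' b / 3)
    (heq : ∀ a < c, F a = G a) (h : AltLex g g') : AltLex F G := by
  set d := dOrd g g' with hd
  have hmem : g d ≠ g' d := dOrd_mem h.1
  have hFGd : F (c + d) ≠ G (c + d) := by
    rw [hF, hG]; intro hh; exact hmem (by linarith)
  have heq' : ∀ a < c + d, F a = G a := by
    intro a ha
    rcases lt_or_ge a c with h1 | h1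
    · exact heq a h1
    · have hab : a = c + (a - c) := (Ordinal.add_sub_cancel_of_le h1).symm
      have hb : a - c < d := by
        have : c + (a - c) < c + d := hab ▸ ha
        exact (add_lt_add_iff_left c).1 this
      rw [hab, hF, hG, dOrd_eq_below hb]
  have hdFG : dOrd F G = c + d := dOrd_eq heq' hFGd
  refine ⟨fun hFG => hFGd (congrFun hFG _), ?_⟩
  rw [hdFG]
  have hpar : OrdEven (c + d) ↔ OrdEven d := ord_even_add_iff hc
  rcases h.2 with ⟨he, hlt⟩ | ⟨he, hlt⟩
  · refine Or.inl ⟨hpar.2 he, ?_⟩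
    rw [hF, hG]; linarith
  · refine Or.inr ⟨fun hh => he (hpar.1 hh), ?_⟩
    rw [hF, hG]; linarith

lemma ord_lt_two_cases {r : Ordinal} (h : r < 2) (h0 : r ≠ 0) : r = 1 := by
  have h1 : r ≤ 1 := by
    have h2 : (2 : Ordinal) = Order.succ 1 := by
      rw [← Ordinal.add_one_eq_succ, one_add_one_eq_two]
    rw [h2] at h
    exact Order.lt_succ_iff.1 h
  exact le_antisymm h1 (Ordinal.one_le_iff_ne_zero.2 h0)


universe u v

lemma ordeven_iff {a : Ordinal} : OrdEven a ↔ ∃ k, a = 2 * k := by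
  constructor
  · intro h
    refine ⟨a / 2, ?_⟩
    conv_lhs => rw [← Ordinal.div_add_mod a 2]
    rw [h, add_zero]
  · rintro ⟨k, rfl⟩
    unfold OrdEven
    simpa using Ordinal.mul_add_mod_self 2 k 0

lemma ordeven_of_lift {d : Ordinal.{u}} {d' : Ordinal.{v}}
    (h : Ordinal.lift.{u} d' = Ordinal.lift.{v} d) (hd : OrdEven d) : OrdEven d' := by
  obtain ⟨k, hk⟩ := ordeven_iff.1 hd
  have hkd : k ≤ d := by
    rw [hk]
    calc k = 1 * k := (one_mul k).symm
      _ ≤ 2 * k := mul_le_mul_left one_le_two k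
  obtain ⟨k', hk'⟩ := Ordinal.mem_range_lift_of_le (show Ordinal.lift.{v} k ≤ Ordinal.lift.{u} d' by
    rw [h]; exact Ordinal.lift_le.2 hkd)
  refine ordeven_iff.2 ⟨k', ?_⟩
  have h2 : Ordinal.lift.{u} d' = Ordinal.lift.{u} (2 * k') := by
    rw [h, hk, Ordinal.lift_mul, Ordinal.lift_mul, hk']
    simp
  exact Ordinal.lift_inj.1 h2

lemma dOrd_le_len {f g : Ordinal → ℝ} {ξ ζ : Ordinal} (hf : IsDSeqLen f ξ)
    (hg : IsDSeqLen g ζ) (h : f ≠ g) : dOrd f g ≤ ξ := by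
  by_contra hlt
  push_neg at hlt
  have hz : g ξ = 0 := by
    rw [← dOrd_eq_below hlt]
    exact hf.2.2.2 _ le_rfl
  have hle : ζ ≤ ξ := by
    by_contra hh
    push_neg at hh
    have := hg.2.2.1 ξ ζ hh le_rfl
    rw [hz] at this
    exact absurd (hg.2.1 ζ).1 (not_le.2 this)
  refine h (funext fun a => ?_)
  rcases le_or_gt a ξ with h1 | h1
  · exact dOrd_eq_below (h1.trans_lt hlt)
  · rw [hf.2.2.2 _ h1.le, hg.2.2.2 _ (hle.trans h1.le)]

/-- Transfer a family of decreasing sequences to another ordinal universe,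
preserving `IsDSeq` and `AltLex`. -/
lemma transfer_family {ι : Type} (Ψ : ι → Ordinal.{u} → ℝ) (hd : ∀ i, IsDSeq.{u} (Ψ i)) :
    ∃ Ψ' : ι → Ordinal.{v} → ℝ, (∀ i, IsDSeq.{v} (Ψ' i)) ∧
      ∀ i j, AltLex (Ψ i) (Ψ j) → AltLex (Ψ' i) (Ψ' j) := by
  classical
  choose ξ hξ using hd
  set C : Ordinal.{v} → Prop := fun a => ∃ b : Ordinal.{u},
    Ordinal.lift.{v} b = Ordinal.lift.{u} a with hC
  have hdns : ∀ (a : Ordinal.{v}) (h : C a),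
      Ordinal.lift.{v} h.choose = Ordinal.lift.{u} a := fun a h => h.choose_spec
  set Ψ' : ι → Ordinal.{v} → ℝ := fun i a => if h : C a then Ψ i h.choose else 0 with hΨ'
  have hω : Ordinal.lift.{v} ((Cardinal.aleph 1).ord : Ordinal.{u})
      = Ordinal.lift.{u} ((Cardinal.aleph 1).ord : Ordinal.{v}) := by
    rw [Cardinal.lift_ord, Cardinal.lift_ord, Cardinal.lift_aleph, Cardinal.lift_aleph]
    simp
  have hup : ∀ b : Ordinal.{u}, b < (Cardinal.aleph 1).ord →
      ∃ a : Ordinal.{v}, Ordinal.lift.{u} a = Ordinal.lift.{v} b := by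
    intro b hb
    refine Ordinal.mem_range_lift_of_le (a := ((Cardinal.aleph 1).ord : Ordinal.{v})) ?_
    rw [← hω]
    exact (Ordinal.lift_lt.2 hb).le
  have key : ∀ i, IsDSeqLen (Ψ i) (ξ i) := hξ
  refine ⟨Ψ', ?_, ?_⟩
  · intro i
    obtain ⟨ξ', hξ'⟩ := hup (ξ i) (key i).1
    refine ⟨ξ', ?_, ?_, ?_, ?_⟩
    · rw [← Ordinal.lift_lt.{u}]
      calc Ordinal.lift.{u} ξ' = Ordinal.lift.{v} (ξ i) := hξ'
        _ < Ordinal.lift.{v} (Cardinal.aleph 1).ord := Ordinal.lift_lt.2 (key i).1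
        _ = Ordinal.lift.{u} (Cardinal.aleph 1).ord := hω
    · intro a
      by_cases h : C a
      · simp only [hΨ', dif_pos h]
        exact (key i).2.1 _
      · simp only [hΨ', dif_neg h]
        exact ⟨le_refl _, zero_le_one⟩
    · intro a b hab hbξ
      have hCb : C b := by
        refine Ordinal.mem_range_lift_of_le (a := ξ i) ?_
        calc Ordinal.lift.{u} b ≤ Ordinal.lift.{u} ξ' := Ordinal.lift_le.2 hbξ
          _ = Ordinal.lift.{v} (ξ i) := hξ'
      have hCa : C a := by
        refine Ordinal.mem_range_lift_of_le (a := ξ i) ?_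
        calc Ordinal.lift.{u} a ≤ Ordinal.lift.{u} ξ' := Ordinal.lift_le.2 (hab.le.trans hbξ)
          _ = Ordinal.lift.{v} (ξ i) := hξ'
      simp only [hΨ', dif_pos hCa, dif_pos hCb]
      refine (key i).2.2.1 _ _ ?_ ?_
      · rw [← Ordinal.lift_lt.{v}, hdns a hCa, hdns b hCb, Ordinal.lift_lt]
        exact hab
      · rw [← Ordinal.lift_le.{v}, hdns b hCb, ← hξ', Ordinal.lift_le]
        exact hbξ
    · intro a ha
      by_cases h : C a
      · simp only [hΨ', dif_pos h]
        refine (key i).2.2.2 _ ?_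
        rw [← Ordinal.lift_le.{v}, hdns a h, ← hξ', Ordinal.lift_le]
        exact ha
      · simp only [hΨ', dif_neg h]
  · intro i j halt
    set d := dOrd (Ψ i) (Ψ j) with hdd
    have hdlt : d < (Cardinal.aleph 1).ord :=
      lt_of_le_of_lt (dOrd_le_len (key i) (key j) halt.1) (key i).1
    obtain ⟨d', hd'⟩ := hup d hdlt
    have hCd' : C d' := ⟨d, hd'.symm⟩
    have hchoose : hCd'.choose = d := by
      have := hdns d' hCd'
      exact Ordinal.lift_inj.1 (this.trans hd')
    have hne : Ψ i d ≠ Ψ j d := dOrd_mem halt.1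
    have hvd : Ψ' i d' = Ψ i d ∧ Ψ' j d' = Ψ j d := by
      constructor <;> simp only [hΨ', dif_pos hCd', hchoose]
    have heq : ∀ a < d', Ψ' i a = Ψ' j a := by
      intro a ha
      by_cases h : C a
      · simp only [hΨ', dif_pos h]
        have : h.choose < d := by
          rw [← Ordinal.lift_lt.{v}, hdns a h, ← hd', Ordinal.lift_lt]
          exact ha
        rw [dOrd_eq_below this]
      · simp only [hΨ', dif_neg h]
    have hdeq : dOrd (Ψ' i) (Ψ' j) = d' := by
      refine dOrd_eq heq ?_
      rw [hvd.1, hvd.2]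
      exact hne
    have hpar : OrdEven d' ↔ OrdEven d :=
      ⟨fun h => ordeven_of_lift hd'.symm h, fun h => ordeven_of_lift hd' h⟩
    refine ⟨?_, ?_⟩
    · intro hh
      rw [hh] at hvd
      exact hne (hvd.1.symm.trans hvd.2)
    · rw [hdeq, hvd.1, hvd.2]
      rcases halt.2 with ⟨he, hlt⟩ | ⟨he, hlt⟩
      · exact Or.inl ⟨hpar.2 he, hlt⟩
      · exact Or.inr ⟨fun hh => he (hpar.1 hh), hlt⟩

lemma glue {L : Type} [LinearOrder L] (Lp : L → Type) [∀ p, LinearOrder (Lp p)]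
    (Ψ : L → Ordinal.{u} → ℝ) (hΨd : ∀ p, IsDSeq (Ψ p))
    (hΨlt : ∀ p q : L, p < q → AltLex (Ψ p) (Ψ q))
    (Ψq : ∀ p, Lp p → Ordinal.{u} → ℝ) (hΨqd : ∀ p q, IsDSeq (Ψq p q))
    (hΨqlt : ∀ p (q q' : Lp p), q < q' → AltLex (Ψq p q) (Ψq p q')) :
    ∃ Φ : (Σ p : L, Lp p) → Ordinal.{u} → ℝ, (∀ x, IsDSeq (Φ x)) ∧
      (∀ (p p' : L) (q : Lp p) (q' : Lp p'), p < p' → AltLex (Φ ⟨p, q⟩) (Φ ⟨p', q'⟩)) ∧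
      (∀ (p : L) (q q' : Lp p), q < q' → AltLex (Φ ⟨p, q⟩) (Φ ⟨p, q'⟩)) := by
  classical

  choose ξ hξ using hΨd
  choose η hη using fun p => hΨqd p
  -- the "padding" offset making `c p` even
  set e : L → Ordinal := fun p => if OrdEven (ξ p) then 2 else 1 with he_def
  set c : L → Ordinal := fun p => ξ p + e p with hc_def
  have he_le : ∀ p, e p ≤ 2 := by
    intro p; by_cases h : OrdEven (ξ p) <;> simp [he_def, h] <;> exact one_le_two
  have he_pos : ∀ p, e p ≠ 0 := by
    intro p; by_cases h : OrdEven (ξ p) <;> simp [he_def, h]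
  have hξc : ∀ p, ξ p < c p := by
    intro p
    calc ξ p < ξ p + 1 := by
          rw [Ordinal.add_one_eq_succ]; exact Order.lt_succ _
      _ ≤ ξ p + e p := add_le_add_right (Ordinal.one_le_iff_ne_zero.2 (he_pos p)) _
  have hceven : ∀ p, OrdEven (c p) := by
    intro p
    by_cases h : OrdEven (ξ p)
    · have : c p = ξ p + 2 := by simp [hc_def, he_def, h]
      rw [this]
      unfold OrdEven
      rw [ord_even_add h]
      exact Ordinal.mod_self 2
    · have hmod : ξ p % 2 = 1 := by
        refine ord_lt_two_cases (Ordinal.mod_lt _ two_ne_zero) h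
      have hxx : ξ p = 2 * (ξ p / 2) + 1 := by
        have := Ordinal.div_add_mod (ξ p) 2
        rw [hmod] at this; exact this.symm
      have : c p = 2 * (ξ p / 2 + 1) := by
        have h1 : c p = ξ p + 1 := by simp [hc_def, he_def, h]
        rw [h1, mul_add, mul_one]
        conv_lhs => rw [hxx]
        rw [add_assoc, one_add_one_eq_two]
      unfold OrdEven
      rw [this]
      have := Ordinal.mul_add_mod_self 2 (ξ p / 2 + 1) 0
      simpa using this
  -- the gluing map
  set Φ : (Σ p : L, Lp p) → Ordinal → ℝ := fun x a =>
    if a ≤ ξ x.1 then (1 + Ψ x.1 a) / 2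
    else if a < c x.1 then 5/12
    else Ψq x.1 x.2 (a - c x.1) / 3 with hΦ_def
  have hhead : ∀ (p : L) (q : Lp p) a, a ≤ ξ p → Φ ⟨p, q⟩ a = (1 + Ψ p a) / 2 := by
    intro p q a ha; simp [hΦ_def, ha]
  have hmid : ∀ (p : L) (q : Lp p) a, ξ p < a → a < c p → Φ ⟨p, q⟩ a = 5/12 := by
    intro p q a h1 h2; simp [hΦ_def, not_le.2 h1, h2]
  have htail' : ∀ (p : L) (q : Lp p) a, c p ≤ a → Φ ⟨p, q⟩ a = Ψq p q (a - c p) / 3 := by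
    intro p q a ha
    have h1 : ¬ a ≤ ξ p := not_le.2 ((hξc p).trans_le ha)
    simp [hΦ_def, h1, not_lt.2 ha]
  have htail : ∀ (p : L) (q : Lp p) b, Φ ⟨p, q⟩ (c p + b) = Ψq p q b / 3 := by
    intro p q b
    rw [htail' p q _ le_self_add, Ordinal.add_sub_cancel]
  -- bounds
  have hΨ01 : ∀ p a, Ψ p a ∈ Set.Icc (0:ℝ) 1 := fun p => (hξ p).2.1
  have hΨq01 : ∀ p (q : Lp p) a, Ψq p q a ∈ Set.Icc (0:ℝ) 1 := fun p q => (hη p q).2.1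
  refine ⟨Φ, ?_, ?_, ?_⟩
  · -- IsDSeq
    rintro ⟨p, q⟩
    refine ⟨c p + η p q, ?_, ?_, ?_, ?_⟩
    · -- length bound
      have hprin := Ordinal.isPrincipal_add_ord (Cardinal.aleph0_le_aleph 1)
      have h2lt : (2 : Ordinal) < (Cardinal.aleph 1).ord := by
        have h2ω : (2 : Ordinal) < ω := by
          have := Ordinal.nat_lt_omega0 2
          simpa using this
        have hωlt : ω < (Cardinal.aleph 1).ord := by
          rw [← Cardinal.ord_aleph0]
          exact Cardinal.ord_lt_ord.2 (by
            rw [← Cardinal.aleph_zero]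
            exact Cardinal.aleph_lt_aleph.2 zero_lt_one)
        exact h2ω.trans hωlt
      have helt : e p < (Cardinal.aleph 1).ord := lt_of_le_of_lt (he_le p) h2lt
      exact hprin (hprin (hξ p).1 helt) (hη p q).1
    · -- values in [0,1]
      intro a
      rcases le_or_gt a (ξ p) with h1 | h1
      · rw [hhead p q a h1]
        obtain ⟨hx0, hx1⟩ := hΨ01 p a
        constructor <;> [linarith; linarith]
      · rcases lt_or_ge a (c p) with h2 | h2
        · rw [hmid p q a h1 h2]; norm_num
        · rw [htail' p q a h2]
          obtain ⟨hx0, hx1⟩ := hΨq01 p q (a - c p)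
          constructor <;> [linarith; linarith]
    · -- strict decrease
      intro a b hab hbZ
      rcases le_or_gt b (ξ p) with hb | hb
      · have ha : a ≤ ξ p := (hab.le.trans hb)
        rw [hhead p q a ha, hhead p q b hb]
        have := (hξ p).2.2.1 a b hab hb
        linarith
      · rcases lt_or_ge b (c p) with hb2 | hb2
        · -- b in middle region
          rw [hmid p q b hb hb2]
          rcases le_or_gt a (ξ p) with ha | ha
          · rw [hhead p q a ha]
            obtain ⟨hx0, _⟩ := hΨ01 p a
            linarith
          · -- a also in middle: impossible
            exfalso
            have h1 : ξ p + 1 ≤ a := by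
              rw [Ordinal.add_one_eq_succ]; exact Order.succ_le_of_lt ha
            have h2 : a + 1 ≤ b := by
              rw [Ordinal.add_one_eq_succ]; exact Order.succ_le_of_lt hab
            have h3 : ξ p + 2 ≤ b := by
              calc ξ p + 2 = (ξ p + 1) + 1 := by
                    rw [add_assoc, one_add_one_eq_two]
                _ ≤ a + 1 := add_le_add_left h1 _
                _ ≤ b := h2
            have h4 : c p ≤ ξ p + 2 := add_le_add_right (he_le p) _
            exact absurd hb2 (not_lt.2 (h4.trans h3))
        · -- b in tail region
          rw [htail' p q b hb2]
          obtain ⟨hy0, hy1⟩ := hΨq01 p q (b - c p)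
          rcases le_or_gt a (ξ p) with ha | ha
          · rw [hhead p q a ha]
            obtain ⟨hx0, _⟩ := hΨ01 p a
            linarith
          · rcases lt_or_ge a (c p) with ha2 | ha2
            · rw [hmid p q a ha ha2]
              linarith
            · -- both in tail
              rw [htail' p q a ha2]
              have hab' : a - c p < b - c p := by
                have h1 : c p + (a - c p) < c p + (b - c p) := by
                  rw [Ordinal.add_sub_cancel_of_le ha2, Ordinal.add_sub_cancel_of_le (ha2.trans hab.le)]
                  exact hab
                exact (add_lt_add_iff_left _).1 h1
              have hble : b - c p ≤ η p q := Ordinal.sub_le.2 hbZ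
              have := (hη p q).2.2.1 _ _ hab' hble
              linarith
    · -- zero beyond
      intro a ha
      have hca : c p ≤ a := le_self_add.trans ha
      rw [htail' p q a hca]
      have : η p q ≤ a - c p := by
        have h1 : c p + η p q ≤ c p + (a - c p) := by
          rw [Ordinal.add_sub_cancel_of_le hca]; exact ha
        exact (add_le_add_iff_left _).1 h1
      rw [(hη p q).2.2.2 _ this]
      norm_num
  · -- across fibers
    intro p p' q q' hpp'
    have halt := hΨlt p p' hpp'
    have hne := halt.1
    set d := dOrd (Ψ p) (Ψ p') with hd
    have hdle : ∀ p1 p2 : L, Ψ p1 ≠ Ψ p2 → dOrd (Ψ p1) (Ψ p2) ≤ ξ p1 := by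
      intro p1 p2 h12
      by_contra hlt
      push_neg at hlt
      have hz : Ψ p2 (ξ p1) = 0 := by
        rw [← dOrd_eq_below hlt]
        exact (hξ p1).2.2.2 _ le_rfl
      have hle : ξ p2 ≤ ξ p1 := by
        by_contra hh
        push_neg at hh
        have := (hξ p2).2.2.1 (ξ p1) (ξ p2) hh le_rfl
        rw [hz] at this
        exact absurd ((hξ p2).2.1 (ξ p2)).1 (not_le.2 this)
      refine h12 (funext fun a => ?_)
      rcases le_or_gt a (ξ p1) with h1 | h1
      · exact dOrd_eq_below (h1.trans_lt hlt)
      · rw [(hξ p1).2.2.2 _ h1.le, (hξ p2).2.2.2 _ (hle.trans h1.le)]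
    have hd1 : d ≤ ξ p := hdle p p' hne
    have hd2 : d ≤ ξ p' := by
      rw [hd, dOrd_symm]
      exact hdle p' p (Ne.symm hne)
    refine altlex_of halt ?_ ?_ ?_
    · intro a ha
      rw [hhead p q a (ha.le.trans hd1), hhead p' q' a (ha.le.trans hd2),
        dOrd_eq_below ha]
    · rw [hhead p q _ hd1, hhead p' q' _ hd2]
      constructor <;> intro <;> linarith
    · rw [hhead p q _ hd1, hhead p' q' _ hd2]
      have := dOrd_mem hne
      intro hh
      exact this (by linarith)
  · -- within a fiber
    intro p q q' hqq'
    refine altlex_shift (hceven p) (htail p q) (htail p q') ?_ (hΨqlt p q q' hqq')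
    intro a ha
    rcases le_or_gt a (ξ p) with h1 | h1
    · rw [hhead p q a h1, hhead p q' a h1]
    · rw [hmid p q a h1 ha, hmid p q' a h1 ha]

theorem stmt_14 (L : Type) [LinearOrder L] (Lp : L → Type) [∀ p, LinearOrder (Lp p)]
    (hL : ∃ Ψ : L → Ordinal → ℝ, (∀ p, IsDSeq (Ψ p)) ∧
      ∀ p q : L, p < q → AltLex (Ψ p) (Ψ q))
    (hLp : ∀ p, ∃ Ψ : Lp p → Ordinal → ℝ, (∀ q, IsDSeq (Ψ q)) ∧
      ∀ q q' : Lp p, q < q' → AltLex (Ψ q) (Ψ q')) :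
    ∃ Φ : (Σ p : L, Lp p) → Ordinal → ℝ, (∀ x, IsDSeq (Φ x)) ∧
      (∀ (p p' : L) (q : Lp p) (q' : Lp p'), p < p' → AltLex (Φ ⟨p, q⟩) (Φ ⟨p', q'⟩)) ∧
      (∀ (p : L) (q q' : Lp p), q < q' → AltLex (Φ ⟨p, q⟩) (Φ ⟨p, q'⟩)) := by
  obtain ⟨Ψ0, hΨ0d, hΨ0lt⟩ := hL
  obtain ⟨Ψ, hΨd, hΨmap⟩ := transfer_family Ψ0 hΨ0d
  choose Ψq0 hΨq0d hΨq0lt using hLp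
  have htr := fun p => transfer_family (Ψq0 p) (hΨq0d p)
  choose Ψq hΨqd hΨqmap using htr
  exact glue Lp Ψ hΨd (fun p q h => hΨmap p q (hΨ0lt p q h)) Ψq hΨqd
    (fun p q q' h => hΨqmap p q q' (hΨq0lt p q q' h))
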